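/- Let X be an R[1]-rigid subcategory and L an R[1]-rigid object. Given a triangle L --x--> X1 --y--> X0 --z--> L[1] with X0, X1 ∈ X, where x is left minimal and z factors through R[1], the objects X0 and X1 have no common indecomposable direct summand. -/
import Mathlib


open CategoryTheory CategoryTheory.Limits CategoryTheory.Pretriangulated

universe v u w

namespace RelCT

/-- Krull–Schmidt: every object decomposes as a finite biproduct of objects with local
endomorphism rings. -/
def KrullSchmidtCat (C : Type u) [Category.{v} C] [Preadditive C] : Prop :=
  ∀ X : C, ∃ (n : ℕ) (f : Fin n → C) (p : ∀ i, X ⟶ f i) (ι : ∀ i, f i ⟶ X),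
    (∀ i, ι i ≫ p i = 𝟙 (f i)) ∧ (∑ i, p i ≫ ι i) = 𝟙 X ∧
    ∀ i (φ : f i ⟶ f i), IsIso φ ∨ IsIso (𝟙 (f i) - φ)

/-- `Fac W`: objects admitting an epimorphism from an object of `W`. -/
def FacSet {Q : Type w} [Category Q] (W : Set Q) : Set Q :=
  {Y | ∃ X ∈ W, ∃ p : X ⟶ Y, Epi p}

/-- `Ext¹(X, F) = 0`, expressed as: every short exact sequence
`0 → F → E → X → 0` splits. -/
def Ext1Zero {Q : Type w} [Category Q] [Abelian Q] (X F : Q) : Prop :=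
  ∀ S : CategoryTheory.ShortComplex Q, S.ShortExact → (S.X₁ ≅ F) → (S.X₃ ≅ X) →
    ∃ r : S.X₂ ⟶ S.X₁, S.f ≫ r = 𝟙 S.X₁

variable {C : Type u} [Category.{v} C] [Preadditive C] [HasZeroObject C]
  [HasShift C ℤ] [∀ n : ℤ, (CategoryTheory.shiftFunctor C n).Additive] [Pretriangulated C]

/-- The shift `D[n]` of a collection of objects, closed under isomorphism. -/
def shiftSet (D : Set C) (n : ℤ) : Set C :=
  {X | ∃ Y ∈ D, Nonempty (X ≅ Y⟦n⟧)}

/-- `f` factors through an object of `D`. -/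
def Factors (D : Set C) {A B : C} (f : A ⟶ B) : Prop :=
  ∃ (Z : C) (g : A ⟶ Z) (h : Z ⟶ B), Z ∈ D ∧ f = g ≫ h

/-- `X * Y`: objects `M` admitting a distinguished triangle `A → M → B → A[1]`
with `A ∈ X`, `B ∈ Y`. -/
def star (X Y : Set C) : Set C :=
  {M | ∃ (A B : C) (f : A ⟶ M) (g : M ⟶ B) (h : B ⟶ A⟦(1:ℤ)⟧),
    A ∈ X ∧ B ∈ Y ∧ (Triangle.mk f g h ∈ distTriang C)}

/-- `R` is rigid: `Hom(R, R[1]) = 0`. -/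
def Rigid (R : Set C) : Prop :=
  ∀ ⦃A B : C⦄, A ∈ R → B ∈ R → ∀ f : A ⟶ B⟦(1:ℤ)⟧, f = 0

/-- `[R[1]](X, Y[1]) = 0` : every morphism from an object of `X` to a first shift of
an object of `Y` which factors through `R[1]` vanishes. -/
def RelRigid (R X Y : Set C) : Prop :=
  ∀ ⦃A B : C⦄, A ∈ X → B ∈ Y → ∀ f : A ⟶ B⟦(1:ℤ)⟧, Factors (shiftSet R 1) f → f = 0

/-- Closure of a collection of objects under finite direct sums and direct summands. -/
inductive addClosure (D : Set C) : C → Prop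
  | of {X : C} : X ∈ D → addClosure D X
  | zero {X : C} : IsZero X → addClosure D X
  | sum {X Y Z : C} : addClosure D X → addClosure D Y →
      (∃ (pX : Z ⟶ X) (pY : Z ⟶ Y) (iX : X ⟶ Z) (iY : Y ⟶ Z),
        iX ≫ pX = 𝟙 X ∧ iY ≫ pY = 𝟙 Y ∧ pX ≫ iX + pY ≫ iY = 𝟙 Z) →
      addClosure D Z
  | smd {X Y : C} : addClosure D Y → (∃ (s : X ⟶ Y) (r : Y ⟶ X), s ≫ r = 𝟙 X) →
      addClosure D X

/-- `D` is closed under finite direct sums and direct summands. -/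
def AddClosed (D : Set C) : Prop := ∀ X : C, addClosure D X → X ∈ D

/-- closed under direct sums (expressed via biproduct data). -/
def SumClosed (D : Set C) : Prop :=
  ∀ ⦃X Y Z : C⦄, X ∈ D → Y ∈ D →
    (∃ (pX : Z ⟶ X) (pY : Z ⟶ Y) (iX : X ⟶ Z) (iY : Y ⟶ Z),
      iX ≫ pX = 𝟙 X ∧ iY ≫ pY = 𝟙 Y ∧ pX ≫ iX + pY ≫ iY = 𝟙 Z) → Z ∈ D

/-- closed under direct summands. -/
def SummandClosed (D : Set C) : Prop :=
  ∀ ⦃X Y : C⦄, Y ∈ D → (∃ (s : X ⟶ Y) (r : Y ⟶ X), s ≫ r = 𝟙 X) → X ∈ D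

/-- closed under isomorphisms. -/
def IsoClosed (D : Set C) : Prop :=
  ∀ ⦃X Y : C⦄, X ∈ D → Nonempty (X ≅ Y) → Y ∈ D

/-- `f : A ⟶ X` is a left `D`-approximation of `A`. -/
def IsLeftApprox (D : Set C) {A X : C} (f : A ⟶ X) : Prop :=
  X ∈ D ∧ ∀ ⦃X' : C⦄, X' ∈ D → ∀ g : A ⟶ X', ∃ h : X ⟶ X', f ≫ h = g

/-- `f : X ⟶ A` is a right `D`-approximation of `A`. -/
def IsRightApprox (D : Set C) {X A : C} (f : X ⟶ A) : Prop :=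
  X ∈ D ∧ ∀ ⦃X' : C⦄, X' ∈ D → ∀ g : X' ⟶ A, ∃ h : X' ⟶ X, h ≫ f = g

/-- `f` is left minimal. -/
def LeftMinimal {A B : C} (f : A ⟶ B) : Prop :=
  ∀ u : B ⟶ B, f ≫ u = f → IsIso u

/-- `f` is right minimal. -/
def RightMinimal {A B : C} (f : A ⟶ B) : Prop :=
  ∀ u : A ⟶ A, u ≫ f = f → IsIso u

/-- `f` lies in the Jacobson radical of the category. -/
def InRadical {A B : C} (f : A ⟶ B) : Prop :=
  ∀ g : B ⟶ A, IsIso (𝟙 A - f ≫ g)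

/-- indecomposable object. -/
def Indec (W : C) : Prop :=
  ¬ IsZero W ∧ ∀ p : W ⟶ W, p ≫ p = p → p = 0 ∨ p = 𝟙 W

/-- two-term `R[1]`-rigid subcategory. -/
def TwoTermRigid (R X : Set C) : Prop :=
  RelRigid R X X ∧ X ⊆ star R (shiftSet R 1)

/-- two-term maximal `R[1]`-rigid subcategory. -/
def TwoTermMaximal (R X : Set C) : Prop :=
  TwoTermRigid R X ∧
  ∀ M ∈ star R (shiftSet R 1),
    RelRigid R {Z | addClosure (insert M X) Z} {Z | addClosure (insert M X) Z} → M ∈ X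

/-- two-term weak `R[1]`-cluster tilting subcategory. -/
def TwoTermWCT (R X : Set C) : Prop :=
  X ⊆ star R (shiftSet R 1) ∧ R ⊆ star (shiftSet X (-1)) X ∧
  ∀ M : C, M ∈ X ↔ (M ∈ star R (shiftSet R 1) ∧ RelRigid R {M} X ∧ RelRigid R X {M})

/-- `R(X) = { R₀ ∈ R | Hom(R₀, X) = 0 }`. -/
def RZero (R X : Set C) : Set C :=
  {A | A ∈ R ∧ ∀ B ∈ X, ∀ f : A ⟶ B, f = 0}

/-- `X` is `R[1]`-functorially finite. -/
def RFunctoriallyFinite (R X : Set C) : Prop :=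
  (∀ R₀ ∈ R, ∃ (X₀ : C) (f : R₀ ⟶ X₀), IsLeftApprox X f) ∧
  (∀ A ∈ shiftSet R 1, ∃ (X₀ : C) (f : X₀ ⟶ A), IsRightApprox X f)

/-- Data of triangles `R₀ → X^{R₀} → V^{R₀} → R₀[1]` with minimal left `X`-approximations,
defining the completion `M_X`. -/
structure MData (R X : Set C) where
  obj : ∀ R₀ : C, R₀ ∈ R → C
  cone : ∀ R₀ : C, R₀ ∈ R → C
  f : ∀ (R₀ : C) (h : R₀ ∈ R), R₀ ⟶ obj R₀ h
  g : ∀ (R₀ : C) (h : R₀ ∈ R), obj R₀ h ⟶ cone R₀ h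
  w : ∀ (R₀ : C) (h : R₀ ∈ R), cone R₀ h ⟶ R₀⟦(1:ℤ)⟧
  tri : ∀ (R₀ : C) (h : R₀ ∈ R), Triangle.mk (f R₀ h) (g R₀ h) (w R₀ h) ∈ distTriang C
  approx : ∀ (R₀ : C) (h : R₀ ∈ R), IsLeftApprox X (f R₀ h)
  minimal : ∀ (R₀ : C) (h : R₀ ∈ R), LeftMinimal (f R₀ h)

/-- `M_X = add (X ∪ {V^R | R ∈ R})`. -/
def MData.cat {R X : Set C} (d : MData R X) : Set C :=
  {Z | addClosure (X ∪ {V | ∃ (R₀ : C) (h : R₀ ∈ R), V = d.cone R₀ h}) Z}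

/-- Data of triangles `R₀ → V_{R₀} → U_{R₀} → R₀[1]` with the last map a right
`X`-approximation, defining the completion `N_X`. -/
structure NData (R X : Set C) where
  cocone : ∀ R₀ : C, R₀ ∈ R → C
  obj : ∀ R₀ : C, R₀ ∈ R → C
  a : ∀ (R₀ : C) (h : R₀ ∈ R), R₀ ⟶ cocone R₀ h
  b : ∀ (R₀ : C) (h : R₀ ∈ R), cocone R₀ h ⟶ obj R₀ h
  c : ∀ (R₀ : C) (h : R₀ ∈ R), obj R₀ h ⟶ R₀⟦(1:ℤ)⟧
  tri : ∀ (R₀ : C) (h : R₀ ∈ R), Triangle.mk (a R₀ h) (b R₀ h) (c R₀ h) ∈ distTriang C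
  approx : ∀ (R₀ : C) (h : R₀ ∈ R), IsRightApprox X (c R₀ h)

/-- `N_X = add (X ∪ {V_R | R ∈ R})`. -/
def NData.cat {R X : Set C} (d : NData R X) : Set C :=
  {Z | addClosure (X ∪ {V | ∃ (R₀ : C) (h : R₀ ∈ R), V = d.cocone R₀ h}) Z}

/-- `(M, N)` is an `X`-mutation pair. -/
def MutationPair (R X M N : Set C) : Prop :=
  M ≠ N ∧ TwoTermWCT R M ∧ TwoTermWCT R N ∧ X ⊆ M ∧ X ⊆ N ∧
  (∀ Y ∈ M, ∃ (Z X₀ : C) (z : Z ⟶ X₀) (x : X₀ ⟶ Y) (y : Y ⟶ Z⟦(1:ℤ)⟧),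
      Z ∈ N ∧ X₀ ∈ X ∧ (Triangle.mk z x y ∈ distTriang C) ∧ Factors (shiftSet R 1) y) ∧
  (∀ Z' ∈ N, ∃ (X' Y' : C) (z' : Z' ⟶ X') (x' : X' ⟶ Y') (y' : Y' ⟶ Z'⟦(1:ℤ)⟧),
      X' ∈ X ∧ Y' ∈ M ∧ (Triangle.mk z' x' y' ∈ distTriang C) ∧ Factors (shiftSet R 1) y')

/-- almost complete two-term weak `R[1]`-cluster tilting subcategory. -/
def AlmostComplete (R X : Set C) : Prop :=
  TwoTermRigid R X ∧ RFunctoriallyFinite R X ∧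
    ∃ W : C, Indec W ∧ W ∉ X ∧ TwoTermWCT R {Z | addClosure (insert W X) Z}

/-- completion of an almost complete subcategory `X`. -/
def IsCompletion (R X U : Set C) : Prop :=
  TwoTermWCT R U ∧ ∃ W : C, Indec W ∧ W ∉ X ∧ U = {Z | addClosure (insert W X) Z}


/-- In a Krull–Schmidt category, an indecomposable object has local endomorphism ring. -/
lemma local_of_indec {D : Type u} [Category.{v} D] [Preadditive D]
    (hKS : KrullSchmidtCat D) {W : D} (hW : Indec W) :
    ∀ φ : W ⟶ W, IsIso φ ∨ IsIso (𝟙 W - φ) := by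
  obtain ⟨n, f, p, ι, h1, h2, h3⟩ := hKS W
  -- each p i ≫ ι i is an idempotent of W, hence 0 or 𝟙
  have hidem : ∀ i, p i ≫ ι i = 0 ∨ p i ≫ ι i = 𝟙 W := by
    intro i
    refine hW.2 _ ?_
    rw [Category.assoc, ← Category.assoc (ι i), h1, Category.id_comp]
  -- some idempotent must be the identity
  have : ∃ j, p j ≫ ι j = 𝟙 W := by
    by_contra hcon
    push_neg at hcon
    have hall : ∀ i, p i ≫ ι i = 0 := fun i => (hidem i).resolve_right (hcon i)
    have : 𝟙 W = 0 := by
      rw [← h2]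
      exact Finset.sum_eq_zero fun i _ => hall i
    exact hW.1 ((Limits.IsZero.iff_id_eq_zero W).2 this)
  obtain ⟨j, hj⟩ := this
  intro φ
  have key : φ = p j ≫ (ι j ≫ φ ≫ p j) ≫ ι j := by
    calc φ = 𝟙 W ≫ φ ≫ 𝟙 W := by simp
    _ = (p j ≫ ι j) ≫ φ ≫ (p j ≫ ι j) := by rw [hj]
    _ = p j ≫ (ι j ≫ φ ≫ p j) ≫ ι j := by simp
  have hpiso : IsIso (p j) := ⟨ι j, hj, h1 j⟩
  have hiiso : IsIso (ι j) := ⟨p j, h1 j, hj⟩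
  rcases h3 j (ι j ≫ φ ≫ p j) with hψ | hψ
  · left
    rw [key]
    exact IsIso.comp_isIso
  · right
    have : 𝟙 W - φ = p j ≫ (𝟙 (f j) - ι j ≫ φ ≫ p j) ≫ ι j := by
      rw [Preadditive.sub_comp, Preadditive.comp_sub, ← key]
      simp [hj]
    rw [this]
    exact IsIso.comp_isIso

theorem statement_7 (hKS : KrullSchmidtCat C) (R X : Set C)
    (hrig : Rigid R) (hXrig : RelRigid R X X)
    {L X₁ X₀ : C} (hL : RelRigid R {L} {L}) (hX₁ : X₁ ∈ X) (hX₀ : X₀ ∈ X)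
    (x : L ⟶ X₁) (y : X₁ ⟶ X₀) (z : X₀ ⟶ L⟦(1:ℤ)⟧)
    (hT : Triangle.mk x y z ∈ distTriang C)
    (hmin : LeftMinimal x) (hfac : Factors (shiftSet R 1) z) :
    ¬ ∃ W : C, Indec W ∧ (∃ (s : W ⟶ X₀) (r : X₀ ⟶ W), s ≫ r = 𝟙 W) ∧
      (∃ (s : W ⟶ X₁) (r : X₁ ⟶ W), s ≫ r = 𝟙 W) := by
  rintro ⟨W, hW, ⟨s₀, r₀, hs₀⟩, ⟨s₁, r₁, hs₁⟩⟩
  obtain ⟨Z, zg, zh, hZ, hzfac⟩ := hfac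
  have hWnz : ¬ IsZero W := hW.1
  -- basic triangle identities, for the triangle T = (x, y, z)
  have hxy : x ≫ y = 0 := comp_distTriang_mor_zero₁₂ _ hT
  have hyz : y ≫ z = 0 := comp_distTriang_mor_zero₂₃ _ hT
  have hzx : z ≫ x⟦(1:ℤ)⟧' = 0 := comp_distTriang_mor_zero₃₁ _ hT
  -- Step 1: x ≫ (r₁ ≫ s₀ ≫ z) = 0 since it factors through R[1] and L is R[1]-rigid
  have hxh : x ≫ (r₁ ≫ s₀ ≫ z) = 0 := by
    refine hL rfl rfl _ ⟨Z, x ≫ r₁ ≫ s₀ ≫ zg, zh, hZ, ?_⟩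
    rw [hzfac]; simp
  -- Step 2: lift through y : there is k : X₀ ⟶ L[1] with r₁ ≫ s₀ ≫ z = y ≫ k
  obtain ⟨k, hk⟩ := Triangle.yoneda_exact₂ _ hT (r₁ ≫ s₀ ≫ z) hxh
  dsimp only [Triangle.mk] at k hk
  -- hk : r₁ ≫ s₀ ≫ z = y ≫ k  (y = T.mor₂)
  -- Step 3: k ≫ x⟦1⟧ = 0, using hXrig
  have hyk1 : y ≫ (k ≫ x⟦(1:ℤ)⟧') = 0 := by
    rw [← Category.assoc, ← hk]
    simp only [Category.assoc, hzx, comp_zero]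
  obtain ⟨g, hg⟩ := Triangle.yoneda_exact₃ _ hT (k ≫ x⟦(1:ℤ)⟧') hyk1
  dsimp only [Triangle.mk] at g hg
  -- hg : k ≫ x⟦1⟧' = z ≫ g, which factors through R[1]
  have hkx : k ≫ x⟦(1:ℤ)⟧' = 0 := by
    refine hXrig hX₀ hX₁ _ ⟨Z, zg, zh ≫ g, hZ, ?_⟩
    rw [hg, hzfac]; simp
  -- Step 4: lift k through z : k = m ≫ z
  obtain ⟨m, hm⟩ := Triangle.coyoneda_exact₁ _ hT k hkx
  dsimp only [Triangle.mk] at m hm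
  -- hm : k = m ≫ z
  -- Step 5: s := s₀ - s₁ ≫ y ≫ m satisfies s ≫ z = 0
  have hsz : (s₀ - s₁ ≫ y ≫ m) ≫ z = 0 := by
    have h1 : s₁ ≫ y ≫ m ≫ z = s₀ ≫ z := by
      rw [← hm, ← hk]
      simp only [← Category.assoc]
      rw [hs₁, Category.id_comp]
    rw [Preadditive.sub_comp]
    simp only [Category.assoc] at h1 ⊢
    rw [h1, sub_self]
  obtain ⟨t, ht⟩ := Triangle.coyoneda_exact₃ _ hT (s₀ - s₁ ≫ y ≫ m) hsz
  dsimp only [Triangle.mk] at t ht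
  -- ht : s₀ - s₁ ≫ y ≫ m = t ≫ y
  have hty : t ≫ y ≫ r₀ = 𝟙 W - s₁ ≫ y ≫ m ≫ r₀ := by
    rw [← Category.assoc, ← ht]
    simp only [Preadditive.sub_comp, Category.assoc, hs₀]
  -- End W is local
  rcases local_of_indec hKS hW (s₁ ≫ y ≫ m ≫ r₀) with hφ | hφ
  · -- φ := s₁ ≫ y ≫ (m ≫ r₀) is an isomorphism : contradict left minimality
    set φ := s₁ ≫ y ≫ m ≫ r₀ with hφdef
    set u := 𝟙 X₁ - y ≫ m ≫ r₀ ≫ inv φ ≫ s₁ with hu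
    have hxu : x ≫ u = x := by
      rw [hu, Preadditive.comp_sub, Category.comp_id]
      simp only [← Category.assoc, hxy]
      simp
    have huiso : IsIso u := hmin u hxu
    have hs₁u : s₁ ≫ u = 0 := by
      rw [hu, Preadditive.comp_sub, Category.comp_id]
      have : s₁ ≫ y ≫ m ≫ r₀ ≫ inv φ ≫ s₁ = φ ≫ inv φ ≫ s₁ := by
        simp only [hφdef, Category.assoc]
      rw [this, ← Category.assoc, IsIso.hom_inv_id, Category.id_comp, sub_self]
    have : s₁ = 0 := by
      have := congrArg (fun w => w ≫ inv u) hs₁u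
      simpa using this
    have : 𝟙 W = 0 := by rw [← hs₁, this, zero_comp]
    exact hWnz ((Limits.IsZero.iff_id_eq_zero W).2 this)
  · -- 𝟙 - φ is an isomorphism : t' ≫ y ≫ r₀ = 𝟙 W gives W as a summand killed by x
    set φ := s₁ ≫ y ≫ m ≫ r₀ with hφdef
    set t' := inv (𝟙 W - φ) ≫ t with ht'
    have ht'y : t' ≫ y ≫ r₀ = 𝟙 W := by
      rw [ht', Category.assoc, hty, IsIso.inv_hom_id]
    set e := y ≫ r₀ ≫ t' with he
    have hee : e ≫ e = e := by
      rw [he]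
      simp only [Category.assoc]
      rw [← Category.assoc t' y, ← Category.assoc (t' ≫ y) r₀,
        Category.assoc t' y, ht'y, Category.id_comp]
    have hxe : x ≫ e = 0 := by
      rw [he, ← Category.assoc, hxy, zero_comp]
    set u := 𝟙 X₁ - e with hu
    have hxu : x ≫ u = x := by
      rw [hu, Preadditive.comp_sub, hxe, Category.comp_id, sub_zero]
    have huiso : IsIso u := hmin u hxu
    have heu : e ≫ u = 0 := by
      rw [hu, Preadditive.comp_sub, hee, Category.comp_id, sub_self]
    have he0 : e = 0 := by
      have := congrArg (fun w => w ≫ inv u) heu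
      simpa using this
    have ht'0 : t' = 0 := by
      have h1 : t' ≫ e = t' := by
        rw [he]
        calc t' ≫ y ≫ r₀ ≫ t' = (t' ≫ y ≫ r₀) ≫ t' := by simp only [Category.assoc]
        _ = t' := by rw [ht'y, Category.id_comp]
      rw [← h1, he0, comp_zero]
    have : 𝟙 W = 0 := by rw [← ht'y, ht'0, zero_comp]
    exact hWnz ((Limits.IsZero.iff_id_eq_zero W).2 this)

end RelCT
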